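/- The critical values of F at its three critical points are F(φ, φ) = (5 + 5√5)/2, F(ψ, ψ) = (5 − 5√5)/2, and F(−1, −1) = −3, where φ = (1 + √5)/2 and ψ = (1 − √5)/2. -/

import Mathlib

open Complex

/-- The Pascaleff–Tonkonog potential function of the monotone Lagrangian torus in the
monotone blow-up of `ℂP²` at four points (Novikov parameter `T` normalized to `1`). -/
noncomputable def PTpotential (u v : ℂ) : ℂ :=
  (1 + u + v) * (1 + u⁻¹) * (1 + v⁻¹) - 3

/-- The golden ratio `(1 + √5)/2` as a complex number. -/
noncomputable def goldenφ : ℂ := (1 + (Real.sqrt 5 : ℂ)) / 2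

/-- The conjugate golden ratio `(1 - √5)/2` as a complex number. -/
noncomputable def goldenψ : ℂ := (1 - (Real.sqrt 5 : ℂ)) / 2

/-- The critical values of `F` at its three critical points are
`F(φ, φ) = (5 + 5√5)/2`, `F(ψ, ψ) = (5 - 5√5)/2` and `F(-1, -1) = -3`. -/
theorem critical_values_of_PTpotential :
    PTpotential goldenφ goldenφ = (5 + 5 * (Real.sqrt 5 : ℂ)) / 2 ∧
    PTpotential goldenψ goldenψ = (5 - 5 * (Real.sqrt 5 : ℂ)) / 2 ∧
    PTpotential (-1) (-1) = -3 := by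
  have hs : ((Real.sqrt 5 : ℂ))^2 = 5 := by
    rw [← Complex.ofReal_pow, Real.sq_sqrt (by norm_num : (5:ℝ) ≥ 0).le]
    norm_num
  have h5 : (1:ℝ) < Real.sqrt 5 := by
    have := Real.lt_sqrt (x := 1) (y := 5) (by norm_num)
    rw [this]; norm_num
  have hφ : goldenφ ≠ 0 := by
    unfold goldenφ
    intro h
    have : (1 + (Real.sqrt 5 : ℂ)) = 0 := by
      field_simp at h; linear_combination h
    have : (1 + Real.sqrt 5 : ℝ) = 0 := by exact_mod_cast this
    linarith
  have hψ : goldenψ ≠ 0 := by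
    unfold goldenψ
    intro h
    have : (1 - (Real.sqrt 5 : ℂ)) = 0 := by
      field_simp at h; linear_combination h
    have : (1 - Real.sqrt 5 : ℝ) = 0 := by exact_mod_cast this
    linarith
  refine ⟨?_, ?_, ?_⟩
  · have hinv : goldenφ⁻¹ = goldenφ - 1 := by
      refine inv_eq_of_mul_eq_one_right ?_
      unfold goldenφ
      linear_combination hs / 4
    unfold PTpotential
    rw [hinv]
    unfold goldenφ
    linear_combination (1 + (Real.sqrt 5 : ℂ) / 4) * hs
  · have hinv : goldenψ⁻¹ = goldenψ - 1 := by
      refine inv_eq_of_mul_eq_one_right ?_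
      unfold goldenψ
      linear_combination hs / 4
    unfold PTpotential
    rw [hinv]
    unfold goldenψ
    linear_combination (1 - (Real.sqrt 5 : ℂ) / 4) * hs
  · unfold PTpotential
    norm_num
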